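/- Fidelity is monotone under partial trace: for density matrices ρ, σ on H_A ⊗ H_B (finite-dimensional), F(ρ,σ) ≤ F(Tr_B ρ, Tr_B σ). -/

import Mathlib

set_option linter.unusedSectionVars false
set_option maxHeartbeats 1000000

open Matrix
open scoped ComplexOrder

open Classical in
/-- Square root of a positive semidefinite matrix (junk value `0` otherwise). -/
noncomputable def msqrt {n : Type*} [Fintype n] [DecidableEq n] (A : Matrix n n ℂ) :
    Matrix n n ℂ :=
  if h : A.PosSemidef then
    (h.1.eigenvectorUnitary : Matrix n n ℂ) * diagonal ((↑) ∘ (√·) ∘ h.1.eigenvalues) *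
      (star h.1.eigenvectorUnitary : Matrix n n ℂ)
  else 0

/-- Fidelity `F(ρ,σ) = (tr √(√ρ σ √ρ))²`. -/
noncomputable def fid {n : Type*} [Fintype n] [DecidableEq n] (ρ σ : Matrix n n ℂ) : ℝ :=
  ((msqrt (msqrt ρ * σ * msqrt ρ)).trace).re ^ 2

/-- Partial trace over the second tensor factor. -/
noncomputable def ptraceSnd {a b : Type*} [Fintype b]
    (A : Matrix (a × b) (a × b) ℂ) : Matrix a a ℂ :=
  Matrix.of fun i j => ∑ y : b, A (i, y) (j, y)

/-- Square root of a PSD matrix (port helper). -/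
noncomputable def Matrix.PosSemidef.sqrt {n : Type*} [Fintype n] [DecidableEq n]
    {A : Matrix n n ℂ} (_ : A.PosSemidef) : Matrix n n ℂ :=
  msqrt A

open scoped MatrixOrder in
lemma Matrix.PosSemidef.sqrt_eq_cfcSqrt {n : Type*} [Fintype n] [DecidableEq n]
    {A : Matrix n n ℂ} (hA : A.PosSemidef) : hA.sqrt = CFC.sqrt A := by
  have h0 : (0 : Matrix n n ℂ) ≤ A := hA.nonneg
  rw [Matrix.PosSemidef.sqrt, msqrt, dif_pos hA, CFC.sqrt_eq_cfc, cfc_nnreal_eq_real _ A,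
    hA.1.cfc_eq]
  simp only [IsHermitian.cfc, Unitary.conjStarAlgAut_apply]
  congr 3
  funext i
  simp [max_eq_left (hA.eigenvalues_nonneg i)]

open scoped MatrixOrder in
lemma Matrix.PosSemidef.posSemidef_sqrt {n : Type*} [Fintype n] [DecidableEq n]
    {A : Matrix n n ℂ} (hA : A.PosSemidef) : hA.sqrt.PosSemidef := by
  rw [hA.sqrt_eq_cfcSqrt]
  exact (CFC.sqrt_nonneg A).posSemidef

open scoped MatrixOrder in
lemma Matrix.PosSemidef.sqrt_mul_self {n : Type*} [Fintype n] [DecidableEq n]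
    {A : Matrix n n ℂ} (hA : A.PosSemidef) : hA.sqrt * hA.sqrt = A := by
  rw [hA.sqrt_eq_cfcSqrt]
  exact CFC.sqrt_mul_sqrt_self A hA.nonneg

open scoped MatrixOrder in
lemma Matrix.PosSemidef.eq_sqrt_of_sq_eq {n : Type*} [Fintype n] [DecidableEq n]
    {A B : Matrix n n ℂ} (hA : A.PosSemidef) (hB : B.PosSemidef) (h : A ^ 2 = B) :
    A = hB.sqrt := by
  rw [hB.sqrt_eq_cfcSqrt]
  exact (CFC.sqrt_unique (by rw [← pow_two, h]) hA.nonneg).symm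

namespace FidProof

section Square

variable {n : Type*} [Fintype n] [DecidableEq n]

lemma msqrt_eq {A : Matrix n n ℂ} (hA : A.PosSemidef) : msqrt A = hA.sqrt := by
  rfl

lemma diag_nonneg {A : Matrix n n ℂ} (hA : A.PosSemidef) (i : n) : 0 ≤ A i i := by
  have h := hA.dotProduct_mulVec_nonneg (Pi.single i 1)
  simpa [dotProduct, mulVec, Pi.single_apply, Finset.sum_ite_eq, Finset.sum_ite_eq',
    mul_comm] using h

lemma trace_nonneg' {A : Matrix n n ℂ} (hA : A.PosSemidef) : 0 ≤ A.trace := by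
  refine Finset.sum_nonneg fun i _ => diag_nonneg hA i

lemma trace_re_nonneg {A : Matrix n n ℂ} (hA : A.PosSemidef) : 0 ≤ A.trace.re := by
  have := trace_nonneg' hA
  exact (Complex.le_def.mp this).1

lemma trace_mul_re_nonneg {A B : Matrix n n ℂ} (hA : A.PosSemidef) (hB : B.PosSemidef) :
    0 ≤ (A * B).trace.re := by
  set s := hA.sqrt with hs
  have hherm : sᴴ = s := hA.posSemidef_sqrt.isHermitian
  have h1 : (sᴴ * B * s).PosSemidef := hB.conjTranspose_mul_mul_same s
  have h2 : (sᴴ * B * s).trace = (A * B).trace := by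
    rw [trace_mul_cycle, hherm, hA.sqrt_mul_self]
  have := trace_re_nonneg h1
  rwa [h2] at this

lemma trace_mul_mono {A X Y : Matrix n n ℂ} (hA : A.PosSemidef)
    (h : (Y - X).PosSemidef) : (A * X).trace.re ≤ (A * Y).trace.re := by
  have h0 := trace_mul_re_nonneg hA h
  rw [Matrix.mul_sub, trace_sub, Complex.sub_re] at h0
  linarith


lemma smul_psd {A : Matrix n n ℂ} (hA : A.PosSemidef) {t : ℝ} (ht : 0 ≤ t) :
    ((t : ℂ) • A).PosSemidef := by
  refine posSemidef_iff_dotProduct_mulVec.mpr ⟨?_, ?_⟩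
  · show ((t : ℂ) • A)ᴴ = _
    rw [conjTranspose_smul, hA.1.eq]
    simp [Complex.star_def, Complex.conj_ofReal]
  · intro x
    have h := hA.dotProduct_mulVec_nonneg x
    rw [smul_mulVec, dotProduct_smul]
    exact smul_nonneg (Complex.zero_le_real.mpr ht) h

lemma smul_one_posDef {t : ℝ} (ht : 0 < t) : ((t : ℂ) • (1 : Matrix n n ℂ)).PosDef := by
  rw [Matrix.smul_one_eq_diagonal]
  exact Matrix.posDef_diagonal_iff.mpr fun i => Complex.zero_lt_real.mpr ht

lemma add_smul_one_posDef {A : Matrix n n ℂ} (hA : A.PosSemidef) {t : ℝ} (ht : 0 < t) :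
    (A + (t : ℂ) • 1).PosDef :=
  Matrix.PosDef.posSemidef_add hA (smul_one_posDef ht)

lemma conj_posDef {E : Matrix n n ℂ} (hE : E.PosDef) (C : Matrix n n ℂ)
    (hC : IsUnit C.det) : (Cᴴ * E * C).PosDef := by
  refine posDef_iff_dotProduct_mulVec.mpr ⟨?_, ?_⟩
  · exact Matrix.isHermitian_conjTranspose_mul_mul C hE.1
  · intro x hx
    have hCx : C *ᵥ x ≠ 0 := by
      intro h
      apply hx
      have : C⁻¹ *ᵥ (C *ᵥ x) = x := by
        rw [mulVec_mulVec, Matrix.nonsing_inv_mul _ hC, one_mulVec]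
      rw [h, mulVec_zero] at this
      exact this.symm
    have := hE.dotProduct_mulVec_pos hCx
    calc (0:ℂ) < star (C *ᵥ x) ⬝ᵥ (E *ᵥ (C *ᵥ x)) := this
      _ = star x ⬝ᵥ ((Cᴴ * E * C) *ᵥ x) := by
          simp only [star_mulVec, ← dotProduct_mulVec, ← mulVec_mulVec]

lemma posDef_of_psd_det {A : Matrix n n ℂ} (hA : A.PosSemidef) (h : IsUnit A.det) :
    A.PosDef := by
  have hs := hA.posSemidef_sqrt
  have hss : hA.sqrt * hA.sqrt = A := hA.sqrt_mul_self
  have hherm : hA.sqrtᴴ = hA.sqrt := hs.isHermitian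
  have hdet : IsUnit hA.sqrt.det := by
    have : hA.sqrt.det * hA.sqrt.det = A.det := by rw [← Matrix.det_mul, hss]
    exact isUnit_of_mul_isUnit_left (this ▸ h)
  have := conj_posDef (Matrix.PosDef.one (n := n) (R := ℂ)) hA.sqrt hdet
  rwa [Matrix.mul_one, hherm, hss] at this

lemma posDef_sqrt {M : Matrix n n ℂ} (hM : M.PosDef) : hM.posSemidef.sqrt.PosDef := by
  apply posDef_of_psd_det hM.posSemidef.posSemidef_sqrt
  have hss := hM.posSemidef.sqrt_mul_self
  have : hM.posSemidef.sqrt.det * hM.posSemidef.sqrt.det = M.det := by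
    rw [← Matrix.det_mul, hss]
  have hdet : IsUnit M.det := (Matrix.isUnit_iff_isUnit_det M).mp hM.isUnit
  rw [← this] at hdet
  exact isUnit_of_mul_isUnit_left hdet


lemma cauchy_schwarz (X Y : Matrix n n ℂ) :
    ((Xᴴ * Y).trace.re) ^ 2 ≤ (Xᴴ * X).trace.re * (Yᴴ * Y).trace.re := by
  set a := (Xᴴ * X).trace.re with ha
  set b := (Yᴴ * Y).trace.re with hb
  set c := (Xᴴ * Y).trace.re with hc
  have hcc : (Yᴴ * X).trace.re = c := by
    have hYX : (Yᴴ * X) = (Xᴴ * Y)ᴴ := by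
      rw [conjTranspose_mul, conjTranspose_conjTranspose]
    rw [hYX, trace_conjTranspose]
    simp [Complex.star_def]
    exact hc.symm
  have key : ∀ t : ℝ, 0 ≤ a * (t * t) + (2 * c) * t + b := by
    intro t
    have hpsd := Matrix.posSemidef_conjTranspose_mul_self ((t : ℂ) • X + Y)
    have h := trace_re_nonneg hpsd
    have hexp : ((t : ℂ) • X + Y)ᴴ * ((t : ℂ) • X + Y)
        = ((t * t : ℝ) : ℂ) • (Xᴴ * X) + (t : ℂ) • (Xᴴ * Y) + ((t : ℂ) • (Yᴴ * X) + Yᴴ * Y) := by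
      rw [conjTranspose_add, conjTranspose_smul]
      simp only [Complex.star_def, Complex.conj_ofReal]
      rw [add_mul, mul_add, mul_add, smul_mul_assoc, smul_mul_assoc, mul_smul_comm, smul_smul,
        Complex.ofReal_mul]
      simp only [mul_smul_comm]
    rw [hexp] at h
    simp only [trace_add, trace_smul, smul_eq_mul, Complex.add_re, ← Complex.ofReal_mul,
      Complex.re_ofReal_mul, ← ha, ← hb, ← hc, hcc] at h
    linarith
  have hd := discrim_le_zero key
  rw [discrim] at hd
  nlinarith [hd]


lemma inv_loewner {E : Matrix n n ℂ} (hE : E.PosDef) {t : ℝ}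
    (h : (E - (t : ℂ) • 1).PosSemidef) :
    ((1 : Matrix n n ℂ) - (t : ℂ) • E⁻¹).PosSemidef := by
  set S := hE.posSemidef.sqrt with hSdef
  have hS : S.PosDef := posDef_sqrt hE
  have hSH : Sᴴ = S := hS.posSemidef.isHermitian
  have hSS : S * S = E := hE.posSemidef.sqrt_mul_self
  have hdet : IsUnit S.det := (Matrix.isUnit_iff_isUnit_det S).mp hS.isUnit
  have hinv : S⁻¹ * S = 1 := Matrix.nonsing_inv_mul _ hdet
  have hinv' : S * S⁻¹ = 1 := Matrix.mul_nonsing_inv _ hdet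
  have hEinv : E⁻¹ = S⁻¹ * S⁻¹ := by rw [← hSS, Matrix.mul_inv_rev]
  have h1 : S⁻¹ * E * S⁻¹ = 1 := by
    rw [← hSS, ← Matrix.mul_assoc, hinv, Matrix.one_mul, hinv']
  have hconj := h.conjTranspose_mul_mul_same S⁻¹
  have hid : (S⁻¹)ᴴ * (E - (t : ℂ) • 1) * S⁻¹ = 1 - (t : ℂ) • E⁻¹ := by
    rw [Matrix.conjTranspose_nonsing_inv, hSH, Matrix.mul_sub, Matrix.sub_mul]
    rw [Matrix.mul_smul, Matrix.mul_one, Matrix.smul_mul, h1, hEinv]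
  rwa [hid] at hconj

lemma key_contraction (Q : Matrix n n ℂ) {δ : ℝ} (hδ : 0 < δ) :
    ((1 : Matrix n n ℂ) - Q * (Qᴴ * Q + (δ : ℂ) • 1)⁻¹ * Qᴴ).PosSemidef := by
  set R := Qᴴ * Q + (δ : ℂ) • 1 with hRdef
  set L := Q * Qᴴ + (δ : ℂ) • 1 with hLdef
  have hR : R.PosDef := add_smul_one_posDef (Matrix.posSemidef_conjTranspose_mul_self Q) hδ
  have hL : L.PosDef := add_smul_one_posDef (Matrix.posSemidef_self_mul_conjTranspose Q) hδ
  have hRdet : IsUnit R.det := (Matrix.isUnit_iff_isUnit_det R).mp hR.isUnit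
  have hLdet : IsUnit L.det := (Matrix.isUnit_iff_isUnit_det L).mp hL.isUnit
  have hcomm : Q * R = L * Q := by
    rw [hRdef, hLdef, Matrix.mul_add, Matrix.add_mul, Matrix.mul_smul, Matrix.mul_one,
      Matrix.smul_mul, Matrix.one_mul, ← Matrix.mul_assoc]
  have hQR : Q * R⁻¹ = L⁻¹ * Q := by
    have e1 : L⁻¹ * (Q * R) * R⁻¹ = L⁻¹ * Q := by
      rw [Matrix.mul_assoc, Matrix.mul_assoc Q R R⁻¹, Matrix.mul_nonsing_inv _ hRdet,
        Matrix.mul_one]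
    have e2 : L⁻¹ * (L * Q) * R⁻¹ = Q * R⁻¹ := by
      rw [← Matrix.mul_assoc L⁻¹ L Q, Matrix.nonsing_inv_mul _ hLdet, Matrix.one_mul]
    rw [← e2, ← hcomm, e1]
  have hfinal : (1 : Matrix n n ℂ) - Q * R⁻¹ * Qᴴ = (δ : ℂ) • L⁻¹ := by
    rw [hQR, Matrix.mul_assoc]
    have : Q * Qᴴ = L - (δ : ℂ) • 1 := by rw [hLdef]; abel
    rw [this, Matrix.mul_sub, Matrix.nonsing_inv_mul _ hLdet, Matrix.mul_smul, Matrix.mul_one]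
    abel
  rw [hfinal]
  exact smul_psd hL.inv.posSemidef hδ.le

lemma sqrt_inv_eq {M W : Matrix n n ℂ} (hM : M.PosDef) (hW : W.PosDef) (hMW : M * W = 1) :
    hW.posSemidef.sqrt = (hM.posSemidef.sqrt)⁻¹ := by
  have hMinv : M⁻¹ = W := Matrix.inv_eq_right_inv hMW
  have hs : hM.posSemidef.sqrt.PosDef := posDef_sqrt hM
  have hA : ((hM.posSemidef.sqrt)⁻¹).PosSemidef := hs.posSemidef.inv
  have hsq : ((hM.posSemidef.sqrt)⁻¹) ^ 2 = W := by
    rw [pow_two, ← Matrix.mul_inv_rev, hM.posSemidef.sqrt_mul_self, hMinv]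
  exact (hA.eq_sqrt_of_sq_eq hW.posSemidef hsq).symm


lemma psd_conj {A : Matrix n n ℂ} (hA : A.PosSemidef) {S : Matrix n n ℂ} (hS : Sᴴ = S) :
    (S * A * S).PosSemidef := by
  have := hA.conjTranspose_mul_mul_same S
  rwa [hS] at this

lemma lemB {ρ σ M W : Matrix n n ℂ} (hρ : ρ.PosSemidef) (hσ : σ.PosSemidef)
    (hM : M.PosDef) (hW : W.PosDef) (hMW : M * W = 1) :
    fid ρ σ ≤ (M * ρ).trace.re * (W * σ).trace.re := by
  set sρ := hρ.sqrt with hsρdef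
  have hsρ : sρ.PosSemidef := hρ.posSemidef_sqrt
  have hsρH : sρᴴ = sρ := hsρ.isHermitian
  have hsρρ : sρ * sρ = ρ := hρ.sqrt_mul_self
  have hA : (sρ * σ * sρ).PosSemidef := psd_conj hσ hsρH
  set N := hA.sqrt with hNdef
  have hN : N.PosSemidef := hA.posSemidef_sqrt
  have hNH : Nᴴ = N := hN.isHermitian
  have hNN : N * N = sρ * σ * sρ := hA.sqrt_mul_self
  have hfid : fid ρ σ = N.trace.re ^ 2 := by
    rw [fid, msqrt_eq hρ, msqrt_eq hA]
  set a := (M * ρ).trace.re with hadef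
  set b := (W * σ).trace.re with hbdef
  have ha0 : 0 ≤ a := trace_mul_re_nonneg hM.posSemidef hρ
  have hb0 : 0 ≤ b := trace_mul_re_nonneg hW.posSemidef hσ
  -- step for each δ > 0
  have step : ∀ δ : ℝ, 0 < δ → fid ρ σ ≤ a * b + δ * ((Fintype.card n : ℝ) * b) := by
    intro δ hδ
    set B := sρ * M * sρ + (δ : ℂ) • 1 with hBdef
    have hMsρ : (sρ * M * sρ).PosSemidef := psd_conj hM.posSemidef hsρH
    have hB : B.PosDef := add_smul_one_posDef hMsρ hδ
    have hBdet : IsUnit B.det := (Matrix.isUnit_iff_isUnit_det B).mp hB.isUnit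
    set sB := hB.posSemidef.sqrt with hsBdef
    have hsB : sB.PosDef := posDef_sqrt hB
    have hsBH : sBᴴ = sB := hsB.posSemidef.isHermitian
    have hsBB : sB * sB = B := hB.posSemidef.sqrt_mul_self
    have hsBdet : IsUnit sB.det := (Matrix.isUnit_iff_isUnit_det sB).mp hsB.isUnit
    have hsBinv : sB * sB⁻¹ = 1 := Matrix.mul_nonsing_inv _ hsBdet
    have hsBinv' : sB⁻¹ * sB = 1 := Matrix.nonsing_inv_mul _ hsBdet
    have hBinv : B⁻¹ = sB⁻¹ * sB⁻¹ := by rw [← hsBB, Matrix.mul_inv_rev]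
    -- Cauchy-Schwarz with X = sB, Y = sB⁻¹ * N
    have hcs := cauchy_schwarz sB (sB⁻¹ * N)
    have e1 : sBᴴ * (sB⁻¹ * N) = N := by
      rw [hsBH, ← Matrix.mul_assoc, hsBinv, Matrix.one_mul]
    have e2 : sBᴴ * sB = B := by rw [hsBH, hsBB]
    have e3 : ((sB⁻¹ * N)ᴴ * (sB⁻¹ * N)).trace = (N * N * B⁻¹).trace := by
      rw [conjTranspose_mul, Matrix.conjTranspose_nonsing_inv, hsBH, hNH]
      have : N * sB⁻¹ * (sB⁻¹ * N) = N * B⁻¹ * N := by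
        rw [hBinv]
        noncomm_ring
      rw [this, trace_mul_cycle]
    rw [e1, e2, e3] at hcs
    -- trace B
    have htrB : B.trace.re = a + δ * (Fintype.card n : ℝ) := by
      rw [hBdef, trace_add, Complex.add_re]
      have t1 : (sρ * M * sρ).trace = (M * ρ).trace := by
        rw [trace_mul_cycle, hsρρ]
        exact trace_mul_comm _ _
      have t2 : ((δ : ℂ) • (1 : Matrix n n ℂ)).trace.re = δ * (Fintype.card n : ℝ) := by
        rw [trace_smul, trace_one]
        simp [Complex.mul_re]
      rw [t1, t2]
    -- bound on trace (N * N * B⁻¹)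
    have hrw : (N * N * B⁻¹).trace = (σ * (sρ * B⁻¹ * sρ)).trace := by
      rw [hNN]
      have e4 : sρ * σ * sρ * B⁻¹ = sρ * (σ * (sρ * B⁻¹)) := by noncomm_ring
      rw [e4, trace_mul_comm]
      have e5 : σ * (sρ * B⁻¹) * sρ = σ * (sρ * B⁻¹ * sρ) := by noncomm_ring
      rw [e5]
    -- the key contraction claim
    set sM := hM.posSemidef.sqrt with hsMdef
    have hsM : sM.PosDef := posDef_sqrt hM
    have hsMH : sMᴴ = sM := hsM.posSemidef.isHermitian
    have hsMM : sM * sM = M := hM.posSemidef.sqrt_mul_self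
    have hsMdet : IsUnit sM.det := (Matrix.isUnit_iff_isUnit_det sM).mp hsM.isUnit
    have hsMinv : sM⁻¹ * sM = 1 := Matrix.nonsing_inv_mul _ hsMdet
    have hsMinv' : sM * sM⁻¹ = 1 := Matrix.mul_nonsing_inv _ hsMdet
    set sW := hW.posSemidef.sqrt with hsWdef
    have hsWeq : sW = sM⁻¹ := sqrt_inv_eq hM hW hMW
    have hsWH : sWᴴ = sW := hW.posSemidef.posSemidef_sqrt.isHermitian
    have hsWW : sW * sW = W := hW.posSemidef.sqrt_mul_self
    set Qm := sM * sρ with hQmdef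
    have hQH : Qmᴴ = sρ * sM := by rw [hQmdef, conjTranspose_mul, hsρH, hsMH]
    have hQQ : Qmᴴ * Qm + (δ : ℂ) • 1 = B := by
      rw [hQH, hQmdef, hBdef]
      congr 1
      rw [Matrix.mul_assoc, ← Matrix.mul_assoc sM sM sρ, hsMM, ← Matrix.mul_assoc]
    have hK := key_contraction Qm hδ
    rw [hQQ] at hK
    have hconj := hK.conjTranspose_mul_mul_same sW
    clear_value sρ N B sB sM sW Qm
    have hid : sWᴴ * ((1 : Matrix n n ℂ) - Qm * B⁻¹ * Qmᴴ) * sW = W - sρ * B⁻¹ * sρ := by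
      rw [hsWH, Matrix.mul_sub, Matrix.mul_one, Matrix.sub_mul, hsWW]
      congr 1
      rw [hsWeq, hQH, hQmdef]
      calc sM⁻¹ * (sM * sρ * B⁻¹ * (sρ * sM)) * sM⁻¹
          = (sM⁻¹ * sM) * (sρ * B⁻¹ * sρ) * (sM * sM⁻¹) := by noncomm_ring
        _ = sρ * B⁻¹ * sρ := by rw [hsMinv, hsMinv', Matrix.one_mul, Matrix.mul_one]
    rw [hid] at hconj
    have hmono := trace_mul_mono hσ hconj
    have hWσ : (σ * W).trace = (W * σ).trace := trace_mul_comm _ _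
    have hNNB : (N * N * B⁻¹).trace.re ≤ b := by
      rw [hrw, hbdef, ← hWσ]
      exact hmono
    have hcard : (0:ℝ) ≤ a + δ * (Fintype.card n : ℝ) := by positivity
    calc fid ρ σ = N.trace.re ^ 2 := hfid
      _ ≤ B.trace.re * (N * N * B⁻¹).trace.re := hcs
      _ ≤ (a + δ * (Fintype.card n : ℝ)) * b := by
          rw [htrB]
          exact mul_le_mul_of_nonneg_left hNNB hcard
      _ = a * b + δ * ((Fintype.card n : ℝ) * b) := by ring
  -- pass to the limit δ → 0
  have hlim : ∀ ε : ℝ, 0 < ε → fid ρ σ ≤ a * b + ε := by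
    intro ε hε
    rcases le_or_gt ((Fintype.card n : ℝ) * b) 0 with h | h
    · have h1 := step 1 one_pos
      nlinarith
    · have hs := step (ε / ((Fintype.card n : ℝ) * b)) (by positivity)
      rw [div_mul_cancel₀ _ h.ne'] at hs
      exact hs
  exact le_of_forall_pos_le_add hlim


noncomputable def tfid (ρ σ : Matrix n n ℂ) : ℝ :=
  ((msqrt (msqrt ρ * σ * msqrt ρ)).trace).re

lemma lemA {ρ σ : Matrix n n ℂ} (hρ : ρ.PosSemidef) (hσ : σ.PosSemidef) {c : ℝ} (hc : 0 < c) :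
    ∃ M W : Matrix n n ℂ, M.PosDef ∧ W.PosDef ∧ M * W = 1 ∧
      (M * ρ).trace.re ≤ tfid ρ σ + c * (Fintype.card n : ℝ) ∧
      (W * σ).trace.re ≤ tfid ρ σ + 2 * c * Real.sqrt (σ.trace.re * (ρ * σ).trace.re)
        + c ^ 3 * σ.trace.re := by
  have hγ : (0:ℝ) < c^2 := by positivity
  set γ : ℝ := c^2 with hγdef
  set sρ := hρ.sqrt with hsρdef
  have hsρ : sρ.PosSemidef := hρ.posSemidef_sqrt
  have hsρH : sρᴴ = sρ := hsρ.isHermitian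
  have hsρρ : sρ * sρ = ρ := hρ.sqrt_mul_self
  have hA : (sρ * σ * sρ).PosSemidef := psd_conj hσ hsρH
  set N := hA.sqrt with hNdef
  have hN : N.PosSemidef := hA.posSemidef_sqrt
  have hNH : Nᴴ = N := hN.isHermitian
  have hNN : N * N = sρ * σ * sρ := hA.sqrt_mul_self
  have htfid : tfid ρ σ = N.trace.re := by rw [tfid, msqrt_eq hρ, msqrt_eq hA]
  set sσ := hσ.sqrt with hsσdef
  have hsσ : sσ.PosSemidef := hσ.posSemidef_sqrt
  have hsσH : sσᴴ = sσ := hsσ.isHermitian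
  have hsσσ : sσ * sσ = σ := hσ.sqrt_mul_self
  clear_value sρ N sσ
  -- the perturbed matrices
  set D := sρ + (γ : ℂ) • 1 with hDdef
  have hD : D.PosDef := add_smul_one_posDef hsρ hγ
  set E := N + (c : ℂ) • 1 with hEdef
  have hE : E.PosDef := add_smul_one_posDef hN hc
  have hDH : Dᴴ = D := hD.posSemidef.isHermitian
  have hEH : Eᴴ = E := hE.posSemidef.isHermitian
  have hDdet : IsUnit D.det := (Matrix.isUnit_iff_isUnit_det D).mp hD.isUnit
  have hEdet : IsUnit E.det := (Matrix.isUnit_iff_isUnit_det E).mp hE.isUnit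
  have hDinv : D * D⁻¹ = 1 := Matrix.mul_nonsing_inv _ hDdet
  have hDinv' : D⁻¹ * D = 1 := Matrix.nonsing_inv_mul _ hDdet
  have hEinv : E * E⁻¹ = 1 := Matrix.mul_nonsing_inv _ hEdet
  have hEinv' : E⁻¹ * E = 1 := Matrix.nonsing_inv_mul _ hEdet
  have hDinvH : (D⁻¹)ᴴ = D⁻¹ := by rw [Matrix.conjTranspose_nonsing_inv, hDH]
  have hEinvH : (E⁻¹)ᴴ = E⁻¹ := by rw [Matrix.conjTranspose_nonsing_inv, hEH]
  have hDinvdet : IsUnit (D⁻¹).det := (Matrix.isUnit_iff_isUnit_det _).mp hD.inv.isUnit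
  refine ⟨D⁻¹ * E * D⁻¹, D * E⁻¹ * D, ?_, ?_, ?_, ?_, ?_⟩
  · have := conj_posDef hE D⁻¹ hDinvdet
    rwa [hDinvH] at this
  · have := conj_posDef hE.inv D hDdet
    rwa [hDH] at this
  · calc D⁻¹ * E * D⁻¹ * (D * E⁻¹ * D)
        = D⁻¹ * E * (D⁻¹ * D) * E⁻¹ * D := by noncomm_ring
      _ = D⁻¹ * (E * E⁻¹) * D := by rw [hDinv']; noncomm_ring
      _ = 1 := by rw [hEinv, Matrix.mul_one, hDinv']
  · -- first trace bound
    have hS : (D⁻¹ * ρ * D⁻¹).PosSemidef := psd_conj hρ hDinvH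
    set P := (γ : ℂ) • sρ + (γ : ℂ) • sρ + ((γ * γ : ℝ) : ℂ) • (1 : Matrix n n ℂ) with hPdef
    have hP : P.PosSemidef :=
      ((smul_psd hsρ hγ.le).add (smul_psd hsρ hγ.le)).add
        (smul_psd Matrix.PosSemidef.one (by positivity))
    have hDD : D * D = ρ + P := by
      rw [hDdef, hPdef, Matrix.add_mul, Matrix.mul_add, Matrix.mul_add, Matrix.smul_mul,
        Matrix.mul_smul, Matrix.smul_mul, Matrix.mul_smul, smul_smul, hsρρ, Matrix.mul_one,
        Matrix.one_mul, ← Complex.ofReal_mul, Matrix.one_mul]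
      abel
    have hone : (1 : Matrix n n ℂ) - D⁻¹ * ρ * D⁻¹ = D⁻¹ * P * D⁻¹ := by
      have h11 : D⁻¹ * (ρ + P) * D⁻¹ = 1 := by
        rw [← hDD, ← Matrix.mul_assoc, hDinv', Matrix.one_mul, hDinv]
      have h12 : D⁻¹ * (ρ + P) * D⁻¹ = D⁻¹ * ρ * D⁻¹ + D⁻¹ * P * D⁻¹ := by
        rw [Matrix.mul_add, Matrix.add_mul]
      rw [← h11, h12]; abel
    have hmono := trace_mul_mono (A := E) (X := D⁻¹ * ρ * D⁻¹) (Y := 1) hE.posSemidef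
      (by rw [hone]; exact psd_conj hP hDinvH)
    have htr : (D⁻¹ * E * D⁻¹ * ρ).trace = (E * (D⁻¹ * ρ * D⁻¹)).trace := by
      have e : D⁻¹ * E * D⁻¹ * ρ = D⁻¹ * (E * (D⁻¹ * ρ)) := by noncomm_ring
      rw [e, trace_mul_comm]
      congr 1
      noncomm_ring
    have htrE : (E * (1 : Matrix n n ℂ)).trace.re = N.trace.re + c * (Fintype.card n : ℝ) := by
      rw [Matrix.mul_one, hEdef, trace_add, Complex.add_re, trace_smul, trace_one]
      simp [Complex.mul_re]
    rw [htfid]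
    calc (D⁻¹ * E * D⁻¹ * ρ).trace.re = (E * (D⁻¹ * ρ * D⁻¹)).trace.re := by rw [htr]
      _ ≤ (E * (1 : Matrix n n ℂ)).trace.re := hmono
      _ = N.trace.re + c * (Fintype.card n : ℝ) := htrE
  · -- second trace bound
    set K := Real.sqrt (σ.trace.re * (ρ * σ).trace.re) with hKdef
    set s := σ.trace.re with hsdef
    set Rq := (ρ * σ).trace.re with hRqdef
    have hs0 : 0 ≤ s := trace_re_nonneg hσ
    have hRq0 : 0 ≤ Rq := trace_mul_re_nonneg hρ hσ
    -- trace rewrite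
    have htr : (D * E⁻¹ * D * σ).trace = (E⁻¹ * (D * σ * D)).trace := by
      have e : D * E⁻¹ * D * σ = D * (E⁻¹ * (D * σ)) := by noncomm_ring
      rw [e, trace_mul_comm]
      congr 1
      noncomm_ring
    have hDσD : D * σ * D = sρ * σ * sρ + (γ : ℂ) • (sρ * σ) + (γ : ℂ) • (σ * sρ)
        + ((γ * γ : ℝ) : ℂ) • σ := by
      rw [hDdef]
      simp only [Matrix.add_mul, Matrix.mul_add, Matrix.smul_mul, Matrix.mul_smul,
        Matrix.one_mul, Matrix.mul_one, smul_add, smul_smul, ← Complex.ofReal_mul]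
      abel
    have hsplit : (E⁻¹ * (D * σ * D)).trace
        = (E⁻¹ * (sρ * σ * sρ)).trace + (γ : ℂ) * (E⁻¹ * (sρ * σ)).trace
          + (γ : ℂ) * (E⁻¹ * (σ * sρ)).trace + ((γ * γ : ℝ) : ℂ) * (E⁻¹ * σ).trace := by
      rw [hDσD, Matrix.mul_add, Matrix.mul_add, Matrix.mul_add, Matrix.mul_smul,
        Matrix.mul_smul, Matrix.mul_smul, trace_add, trace_add, trace_add, trace_smul,
        trace_smul, trace_smul, smul_eq_mul, smul_eq_mul, smul_eq_mul]
    -- piece 1 : (E⁻¹ * (N*N)).trace.re ≤ N.trace.re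
    have hNE : E * N = N * N + (c : ℂ) • N := by
      rw [hEdef, Matrix.add_mul, Matrix.smul_mul, Matrix.one_mul]
    have hNE' : N * E = N * N + (c : ℂ) • N := by
      rw [hEdef, Matrix.mul_add, Matrix.mul_smul, Matrix.mul_one]
    have h2 : E⁻¹ * (N * N) + (c : ℂ) • (E⁻¹ * N) = N := by
      have h20 : E⁻¹ * (E * N) = N := by rw [← Matrix.mul_assoc, hEinv', Matrix.one_mul]
      rw [hNE, Matrix.mul_add, Matrix.mul_smul] at h20
      exact h20
    have hposd : (E⁻¹ * N).PosSemidef := by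
      have hX : (N * N + (c : ℂ) • N).PosSemidef := by
        refine Matrix.PosSemidef.add ?_ (smul_psd hN hc.le)
        have := Matrix.posSemidef_conjTranspose_mul_self N
        rwa [hNH] at this
      have hconj := psd_conj hX hEinvH
      have heq : E⁻¹ * (N * N + (c : ℂ) • N) * E⁻¹ = E⁻¹ * N := by
        rw [← hNE']
        calc E⁻¹ * (N * E) * E⁻¹ = E⁻¹ * N * (E * E⁻¹) := by noncomm_ring
          _ = E⁻¹ * N := by rw [hEinv, Matrix.mul_one]
      rwa [heq] at hconj
    have hr1 : (E⁻¹ * (sρ * σ * sρ)).trace.re ≤ N.trace.re := by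
      have hd := trace_re_nonneg (smul_psd hposd hc.le)
      have heq : N - E⁻¹ * (N * N) = (c : ℂ) • (E⁻¹ * N) := sub_eq_of_eq_add' h2.symm
      have hd2 : 0 ≤ (N - E⁻¹ * (N * N)).trace.re := by rw [heq]; exact hd
      rw [trace_sub, Complex.sub_re] at hd2
      rw [← hNN]
      linarith
    -- piece 3 : (E⁻¹ * σ).trace.re ≤ c⁻¹ * s
    have hEsubN : E - (c : ℂ) • 1 = N := by rw [hEdef]; abel
    have hloe : ((1 : Matrix n n ℂ) - (c : ℂ) • E⁻¹).PosSemidef :=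
      inv_loewner hE (by rw [hEsubN]; exact hN)
    have hpsd3 : ((((c⁻¹ : ℝ)) : ℂ) • (1 : Matrix n n ℂ) - E⁻¹).PosSemidef := by
      have hsm : (((c⁻¹ : ℝ)) : ℂ) • ((1 : Matrix n n ℂ) - (c : ℂ) • E⁻¹)
          = (((c⁻¹ : ℝ)) : ℂ) • (1 : Matrix n n ℂ) - E⁻¹ := by
        rw [smul_sub, smul_smul, ← Complex.ofReal_mul, inv_mul_cancel₀ hc.ne',
          Complex.ofReal_one, one_smul]
      rw [← hsm]
      exact smul_psd hloe (by positivity)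
    have hr3 : (E⁻¹ * σ).trace.re ≤ c⁻¹ * s := by
      have hmono := trace_mul_mono (A := σ) (X := E⁻¹) (Y := (((c⁻¹ : ℝ)) : ℂ) • 1) hσ hpsd3
      have e2 : (σ * ((((c⁻¹ : ℝ)) : ℂ) • 1)).trace.re = c⁻¹ * s := by
        rw [Matrix.mul_smul, Matrix.mul_one, trace_smul, smul_eq_mul, Complex.re_ofReal_mul]
      rw [trace_mul_comm]
      rw [e2] at hmono
      exact hmono
    -- piece 2 : the cross terms
    have hstar : (E⁻¹ * (σ * sρ)).trace = star ((E⁻¹ * (sρ * σ)).trace) := by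
      have hH : (E⁻¹ * (sρ * σ))ᴴ = σ * sρ * E⁻¹ := by
        rw [conjTranspose_mul, conjTranspose_mul, hEinvH, hsρH, hσ.isHermitian.eq]
      rw [← trace_conjTranspose, hH]
      exact trace_mul_comm _ _
    have hz1 : (E⁻¹ * (sρ * σ)).trace.re ≤ c⁻¹ * K := by
      have hcs2 := cauchy_schwarz (E⁻¹ * sσ) (sρ * sσ)
      have eX : (E⁻¹ * sσ)ᴴ = sσ * E⁻¹ := by rw [conjTranspose_mul, hEinvH, hsσH]
      -- identify the inner product with z1
      have eZ : ((E⁻¹ * sσ)ᴴ * (sρ * sσ)).trace = (E⁻¹ * (sρ * σ)).trace := by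
        rw [eX]
        rw [trace_mul_comm]
        have : sρ * sσ * (sσ * E⁻¹) = sρ * σ * E⁻¹ := by rw [← hsσσ]; noncomm_ring
        rw [this, trace_mul_comm]
      -- bound XᴴX
      have hEE : (E * E).PosDef := by
        have h := conj_posDef Matrix.PosDef.one E hEdet
        rwa [Matrix.mul_one, hEH] at h
      have hEEc : (E * E - ((c * c : ℝ) : ℂ) • 1).PosSemidef := by
        have hexp : E * E = N * N + (c : ℂ) • N + (c : ℂ) • N + ((c * c : ℝ) : ℂ) • 1 := by
          rw [hEdef]
          simp only [Matrix.add_mul, Matrix.mul_add, Matrix.smul_mul, Matrix.mul_smul,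
            Matrix.one_mul, Matrix.mul_one, smul_add, smul_smul, ← Complex.ofReal_mul]
          abel
        have : E * E - ((c * c : ℝ) : ℂ) • 1 = N * N + (c : ℂ) • N + (c : ℂ) • N := by
          rw [hexp]; abel
        rw [this]
        have hNN2 : (N * N).PosSemidef := by
          have := Matrix.posSemidef_conjTranspose_mul_self N
          rwa [hNH] at this
        exact (hNN2.add (smul_psd hN hc.le)).add (smul_psd hN hc.le)
      have hinv2 := inv_loewner hEE hEEc
      have hEEinv : (E * E)⁻¹ = E⁻¹ * E⁻¹ := by rw [Matrix.mul_inv_rev]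
      have hpsd4 : (((((c * c)⁻¹ : ℝ)) : ℂ) • (1 : Matrix n n ℂ) - E⁻¹ * E⁻¹).PosSemidef := by
        have hsm : ((((c * c)⁻¹ : ℝ)) : ℂ) • ((1 : Matrix n n ℂ) - ((c * c : ℝ) : ℂ) • (E * E)⁻¹)
            = ((((c * c)⁻¹ : ℝ)) : ℂ) • (1 : Matrix n n ℂ) - E⁻¹ * E⁻¹ := by
          rw [smul_sub, smul_smul, ← Complex.ofReal_mul, inv_mul_cancel₀ (by positivity),
            Complex.ofReal_one, one_smul, hEEinv]
        rw [← hsm]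
        exact smul_psd hinv2 (by positivity)
      have hXX : ((E⁻¹ * sσ)ᴴ * (E⁻¹ * sσ)).trace.re ≤ (c * c)⁻¹ * s := by
        have eXX : ((E⁻¹ * sσ)ᴴ * (E⁻¹ * sσ)).trace = (σ * (E⁻¹ * E⁻¹)).trace := by
          have e7 : E⁻¹ * sσ * (sσ * E⁻¹) = E⁻¹ * σ * E⁻¹ := by rw [← hsσσ]; noncomm_ring
          calc ((E⁻¹ * sσ)ᴴ * (E⁻¹ * sσ)).trace
              = ((E⁻¹ * sσ) * (sσ * E⁻¹)).trace := by rw [eX]; exact trace_mul_comm _ _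
            _ = (E⁻¹ * σ * E⁻¹).trace := by rw [e7]
            _ = (E⁻¹ * E⁻¹ * σ).trace := trace_mul_cycle _ _ _
            _ = (σ * (E⁻¹ * E⁻¹)).trace := trace_mul_comm _ _
        rw [eXX]
        have hmono := trace_mul_mono (A := σ) (X := E⁻¹ * E⁻¹)
          (Y := ((((c * c)⁻¹ : ℝ)) : ℂ) • 1) hσ hpsd4
        have e2 : (σ * (((((c * c)⁻¹ : ℝ)) : ℂ) • 1)).trace.re = (c * c)⁻¹ * s := by
          rw [Matrix.mul_smul, Matrix.mul_one, trace_smul, smul_eq_mul, Complex.re_ofReal_mul]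
        rw [e2] at hmono
        exact hmono
      have hYY : ((sρ * sσ)ᴴ * (sρ * sσ)).trace.re = Rq := by
        rw [conjTranspose_mul, hsρH, hsσH]
        have : sσ * sρ * (sρ * sσ) = sσ * ρ * sσ := by rw [← hsρρ]; noncomm_ring
        rw [this, trace_mul_cycle]
        have : sσ * sσ * ρ = σ * ρ := by rw [hsσσ]
        rw [this, trace_mul_comm]
      have hXX0 : 0 ≤ ((E⁻¹ * sσ)ᴴ * (E⁻¹ * sσ)).trace.re :=
        trace_re_nonneg (Matrix.posSemidef_conjTranspose_mul_self _)
      rw [eZ, hYY] at hcs2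
      -- z1.re ^ 2 ≤ ((c*c)⁻¹ * s) * Rq
      have hsq : (E⁻¹ * (sρ * σ)).trace.re ^ 2 ≤ ((c * c)⁻¹ * s) * Rq := by
        calc (E⁻¹ * (sρ * σ)).trace.re ^ 2
            ≤ ((E⁻¹ * sσ)ᴴ * (E⁻¹ * sσ)).trace.re * Rq := hcs2
          _ ≤ ((c * c)⁻¹ * s) * Rq := mul_le_mul_of_nonneg_right hXX hRq0
      have hKval : Real.sqrt (((c * c)⁻¹ * s) * Rq) = c⁻¹ * K := by
        rw [hKdef, mul_assoc, Real.sqrt_mul (by positivity), Real.sqrt_inv,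
          Real.sqrt_mul_self hc.le]
      calc (E⁻¹ * (sρ * σ)).trace.re ≤ |(E⁻¹ * (sρ * σ)).trace.re| := le_abs_self _
        _ = Real.sqrt ((E⁻¹ * (sρ * σ)).trace.re ^ 2) := (Real.sqrt_sq_eq_abs _).symm
        _ ≤ Real.sqrt (((c * c)⁻¹ * s) * Rq) := Real.sqrt_le_sqrt hsq
        _ = c⁻¹ * K := hKval
    -- assemble
    have hK0 : 0 ≤ K := Real.sqrt_nonneg _
    have hre : (D * E⁻¹ * D * σ).trace.re
        = (E⁻¹ * (sρ * σ * sρ)).trace.re + γ * (E⁻¹ * (sρ * σ)).trace.re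
          + γ * (E⁻¹ * (σ * sρ)).trace.re + (γ * γ) * (E⁻¹ * σ).trace.re := by
      rw [htr, hsplit]
      simp [Complex.add_re, Complex.re_ofReal_mul]
    have hz2re : (E⁻¹ * (σ * sρ)).trace.re = (E⁻¹ * (sρ * σ)).trace.re := by
      rw [hstar, Complex.star_def, Complex.conj_re]
    rw [htfid, hre, hz2re]
    have hb1 : γ * (E⁻¹ * (sρ * σ)).trace.re ≤ γ * (c⁻¹ * K) :=
      mul_le_mul_of_nonneg_left hz1 hγ.le
    have hb3 : (γ * γ) * (E⁻¹ * σ).trace.re ≤ (γ * γ) * (c⁻¹ * s) :=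
      mul_le_mul_of_nonneg_left hr3 (by positivity)
    have halg1 : γ * (c⁻¹ * K) = c * K := by
      rw [hγdef]; field_simp
    have halg2 : (γ * γ) * (c⁻¹ * s) = c ^ 3 * s := by
      rw [hγdef]; field_simp
    nlinarith [hr1, hb1, hb3]


lemma fid_eq_tfid_sq (ρ σ : Matrix n n ℂ) : fid ρ σ = tfid ρ σ ^ 2 := rfl

lemma tfid_nonneg {ρ σ : Matrix n n ℂ} (hρ : ρ.PosSemidef) (hσ : σ.PosSemidef) :
    0 ≤ tfid ρ σ := by
  have hsρH : (hρ.sqrt)ᴴ = hρ.sqrt := hρ.posSemidef_sqrt.isHermitian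
  have hA : (hρ.sqrt * σ * hρ.sqrt).PosSemidef := psd_conj hσ hsρH
  rw [tfid, msqrt_eq hρ, msqrt_eq hA]
  exact trace_re_nonneg hA.posSemidef_sqrt

end Square

section Lift

variable {a b : Type*} [Fintype a] [DecidableEq a] [Fintype b] [DecidableEq b]

noncomputable def liftB (b : Type*) [Fintype b] [DecidableEq b]
    (M : Matrix a a ℂ) : Matrix (a × b) (a × b) ℂ :=
  Matrix.of fun p q => M p.1 q.1 * (if p.2 = q.2 then 1 else 0)

lemma lift_mul (M W : Matrix a a ℂ) : liftB b M * liftB b W = liftB b (M * W) := by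
  ext ⟨i, y⟩ ⟨j, y'⟩
  simp only [liftB, Matrix.mul_apply, Matrix.of_apply, Fintype.sum_prod_type]
  simp only [mul_ite, ite_mul, mul_one, one_mul, mul_zero, zero_mul, Finset.sum_ite_eq',
    Finset.mem_univ, if_true, Finset.sum_ite_irrel, Finset.sum_const_zero]

lemma lift_one : liftB b (1 : Matrix a a ℂ) = 1 := by
  ext ⟨i, y⟩ ⟨j, y'⟩
  by_cases h : i = j <;> by_cases h' : y = y' <;>
    simp [liftB, Matrix.one_apply, Prod.ext_iff, h, h']

lemma lift_posDef {M : Matrix a a ℂ} (hM : M.PosDef) : (liftB b M).PosDef := by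
  refine posDef_iff_dotProduct_mulVec.mpr ⟨?_, ?_⟩
  · ext ⟨i, y⟩ ⟨j, y'⟩
    have h1 : star (M j i) = M i j := by
      have := congrFun (congrFun hM.1 i) j
      simpa [conjTranspose_apply] using this
    by_cases hy : y' = y
    · subst hy
      simp [liftB, conjTranspose_apply, star_mul', h1]
    · have hy2 : ¬ y = y' := fun h => hy h.symm
      simp [liftB, conjTranspose_apply, hy, hy2]
  · intro x hx
    have hsum : star x ⬝ᵥ (liftB b M) *ᵥ x
        = ∑ y : b, star (fun i => x (i, y)) ⬝ᵥ M *ᵥ (fun i => x (i, y)) := by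
      simp only [dotProduct, mulVec, liftB, Matrix.of_apply, Fintype.sum_prod_type,
        Pi.star_apply]
      rw [Finset.sum_comm]
      refine Finset.sum_congr rfl fun y _ => ?_
      refine Finset.sum_congr rfl fun i _ => ?_
      congr 1
      refine Finset.sum_congr rfl fun k _ => ?_
      simp only [mul_ite, ite_mul, mul_one, one_mul, mul_zero, zero_mul,
        Finset.sum_ite_eq, Finset.mem_univ, if_true]
    rw [hsum]
    obtain ⟨⟨i0, y0⟩, hp⟩ := Function.ne_iff.mp hx
    have hy0 : (fun i => x (i, y0)) ≠ 0 := by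
      intro h
      exact hp (congrFun h i0)
    refine Finset.sum_pos' (fun y _ => hM.posSemidef.dotProduct_mulVec_nonneg _) ⟨y0, Finset.mem_univ _, hM.dotProduct_mulVec_pos hy0⟩

lemma lift_trace (M : Matrix a a ℂ) (A : Matrix (a × b) (a × b) ℂ) :
    (liftB b M * A).trace = (M * ptraceSnd A).trace := by
  simp only [Matrix.trace, Matrix.diag, Matrix.mul_apply, liftB, ptraceSnd, Matrix.of_apply,
    Fintype.sum_prod_type, mul_ite, ite_mul, mul_one, mul_zero, zero_mul,
    Finset.sum_ite_irrel, Finset.sum_const_zero, Finset.sum_ite_eq, Finset.sum_ite_eq',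
    Finset.mem_univ, if_true, Finset.mul_sum]
  exact Finset.sum_congr rfl fun i _ => Finset.sum_comm

lemma ptrace_psd {A : Matrix (a × b) (a × b) ℂ} (hA : A.PosSemidef) :
    (ptraceSnd A).PosSemidef := by
  refine posSemidef_iff_dotProduct_mulVec.mpr ⟨?_, ?_⟩
  · ext i j
    simp only [ptraceSnd, conjTranspose_apply, Matrix.of_apply, star_sum]
    refine Finset.sum_congr rfl fun y _ => ?_
    have := congrFun (congrFun hA.1 (i, y)) (j, y)
    simpa [conjTranspose_apply] using this
  · intro x
    have hterm : ∀ y : b,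
        star (fun p : a × b => if p.2 = y then x p.1 else 0) ⬝ᵥ
          A *ᵥ (fun p : a × b => if p.2 = y then x p.1 else 0)
        = ∑ i : a, ∑ j : a, star (x i) * (A (i, y) (j, y) * x j) := by
      intro y
      simp only [dotProduct, mulVec, Pi.star_apply, Fintype.sum_prod_type,
        apply_ite (star : ℂ → ℂ), star_zero, mul_ite, ite_mul, zero_mul, mul_zero,
        Finset.sum_ite_irrel, Finset.sum_const_zero, Finset.sum_ite_eq, Finset.sum_ite_eq',
        Finset.mem_univ, if_true, Finset.mul_sum]
    have hsum : star x ⬝ᵥ (ptraceSnd A) *ᵥ x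
        = ∑ y : b, star (fun p : a × b => if p.2 = y then x p.1 else 0) ⬝ᵥ
            A *ᵥ (fun p : a × b => if p.2 = y then x p.1 else 0) := by
      calc star x ⬝ᵥ (ptraceSnd A) *ᵥ x
          = ∑ i : a, ∑ j : a, ∑ y : b, star (x i) * (A (i, y) (j, y) * x j) := by
            simp only [dotProduct, mulVec, ptraceSnd, Matrix.of_apply, Pi.star_apply,
              Finset.mul_sum, Finset.sum_mul]
        _ = ∑ i : a, ∑ y : b, ∑ j : a, star (x i) * (A (i, y) (j, y) * x j) :=
            Finset.sum_congr rfl fun i _ => Finset.sum_comm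
        _ = ∑ y : b, ∑ i : a, ∑ j : a, star (x i) * (A (i, y) (j, y) * x j) :=
            Finset.sum_comm
        _ = ∑ y : b, star (fun p : a × b => if p.2 = y then x p.1 else 0) ⬝ᵥ
              A *ᵥ (fun p : a × b => if p.2 = y then x p.1 else 0) :=
            Finset.sum_congr rfl fun y _ => (hterm y).symm
    rw [hsum]
    exact Finset.sum_nonneg fun y _ => hA.dotProduct_mulVec_nonneg _


end Lift

end FidProof

open FidProof in
/-- fidelity is monotone under partial trace:
`F(ρ,σ) ≤ F(Tr_B ρ, Tr_B σ)`. -/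
theorem fidelity_le_fidelity_ptrace {a b : Type*}
    [Fintype a] [DecidableEq a] [Fintype b] [DecidableEq b]
    (ρ σ : Matrix (a × b) (a × b) ℂ)
    (hρ : ρ.PosSemidef) (hρt : ρ.trace = 1)
    (hσ : σ.PosSemidef) (hσt : σ.trace = 1) :
    fid ρ σ ≤ fid (ptraceSnd ρ) (ptraceSnd σ) := by
  have hρ' : (ptraceSnd ρ).PosSemidef := ptrace_psd hρ
  have hσ' : (ptraceSnd σ).PosSemidef := ptrace_psd hσ
  set T := tfid (ptraceSnd ρ) (ptraceSnd σ) with hT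
  set K := Real.sqrt ((ptraceSnd σ).trace.re * (ptraceSnd ρ * ptraceSnd σ).trace.re) with hK
  set sc := (ptraceSnd σ).trace.re with hsc
  set nn := (Fintype.card a : ℝ) with hnn
  have hT0 : 0 ≤ T := tfid_nonneg hρ' hσ'
  have key : ∀ c : ℝ, 0 < c →
      fid ρ σ ≤ (T + c * nn) * (T + 2 * c * K + c ^ 3 * sc) := by
    intro c hc
    obtain ⟨M, W, hM, hW, hMW, h1, h2⟩ := lemA hρ' hσ' hc
    have hlM : (liftB b M).PosDef := lift_posDef hM
    have hlW : (liftB b W).PosDef := lift_posDef hW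
    have hlMW : liftB b M * liftB b W = 1 := by rw [lift_mul, hMW, lift_one]
    have hB := lemB hρ hσ hlM hlW hlMW
    rw [lift_trace, lift_trace] at hB
    refine le_trans hB ?_
    have ha0 : 0 ≤ (M * ptraceSnd ρ).trace.re := trace_mul_re_nonneg hM.posSemidef hρ'
    have hb0 : 0 ≤ (W * ptraceSnd σ).trace.re := trace_mul_re_nonneg hW.posSemidef hσ'
    have hnn0 : 0 ≤ nn := by rw [hnn]; positivity
    exact mul_le_mul h1 h2 hb0 (by positivity)
  have hcont : Filter.Tendsto (fun c : ℝ => (T + c * nn) * (T + 2 * c * K + c ^ 3 * sc))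
      (nhdsWithin 0 (Set.Ioi 0)) (nhds (fid (ptraceSnd ρ) (ptraceSnd σ))) := by
    have hcont2 : Continuous fun c : ℝ => (T + c * nn) * (T + 2 * c * K + c ^ 3 * sc) := by
      continuity
    have h0 := hcont2.tendsto 0
    have heq : (T + 0 * nn) * (T + 2 * 0 * K + 0 ^ 3 * sc)
        = fid (ptraceSnd ρ) (ptraceSnd σ) := by
      rw [fid_eq_tfid_sq, ← hT]; ring
    rw [heq] at h0
    exact h0.mono_left nhdsWithin_le_nhds
  refine ge_of_tendsto hcont ?_
  filter_upwards [self_mem_nhdsWithin] with c hc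
  exact key c hc
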